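/- Let n, r, k be positive integers with N := rn - k > 0, and let a ∈ [N]^n be weakly increasing with period p := Π_N(a) (the smallest positive integer with (a + p mod N)_↑ = a). Write ℓ = N/p and n' = n/ℓ. Then n' is an integer and a_{j+n'} = a_j + p for all j ∈ [n - n'], with 1 ≤ a_1 ≤ ... ≤ a_{n'} ≤ p. -/

import Mathlib

/-- The representative of `s` modulo `t` lying in `[t] = {1, …, t}` (for `s ≥ 1`). -/
def modRep (s t : ℕ) : ℕ := (s - 1) % t + 1

/-- The componentwise shift `a + i mod N`, with values in `[N]`. -/
def shiftVec (N : ℕ) {n : ℕ} (a : Fin n → ℕ) (i : ℕ) : Fin n → ℕ :=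
  fun j => modRep (a j + i) N

/-- The weakly increasing rearrangement of a tuple. -/
def sortVec {n : ℕ} (v : Fin n → ℕ) : Fin n → ℕ := v ∘ Tuple.sort v

lemma perm_count {n : ℕ} (f : Fin n → ℕ) (σ : Equiv.Perm (Fin n)) (v : ℕ) :
    (Finset.univ.filter fun j => f (σ j) = v).card
      = (Finset.univ.filter fun j => f j = v).card := by
  apply Finset.card_bij' (fun j _ => σ j) (fun j _ => σ.symm j) <;> simp

lemma count_eq {n : ℕ} (f g : Fin n → ℕ) (h : sortVec f = sortVec g) (v : ℕ) :
    (Finset.univ.filter fun j => f j = v).card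
      = (Finset.univ.filter fun j => g j = v).card := by
  have h1 := perm_count f (Tuple.sort f) v
  have h2 := perm_count g (Tuple.sort g) v
  rw [← h1, ← h2]
  congr 1
  ext j
  have := congrFun h j
  simp only [sortVec, Function.comp_apply] at this
  simp [this]

theorem stmt12 (n r k N : ℕ) (hr : 0 < r) (hk : 0 < k) (hn : 0 < n)
    (hN : N = r * n - k) (hNpos : 0 < N)
    (a : Fin n → ℕ) (ha : ∀ j, a j ∈ Finset.Icc 1 N) (hmono : Monotone a)
    (p : ℕ) (hp : 0 < p)
    (hshift : sortVec (shiftVec N a p) = sortVec a)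
    (hmin : ∀ q, 0 < q → sortVec (shiftVec N a q) = sortVec a → p ≤ q)
    (hdvd : p ∣ N) :
    (N / p) ∣ n ∧
    (∀ j : Fin n, ∀ h : j.val + n / (N / p) < n, a ⟨j.val + n / (N / p), h⟩ = a j + p) ∧
    (∀ j : Fin n, j.val < n / (N / p) → a j ≤ p) ∧
    1 ≤ a ⟨0, hn⟩ := by
  classical
  set F : ℕ → ℕ := fun x => (Finset.univ.filter fun j : Fin n => a j ≤ x).card with hF
  set C : ℕ → ℕ := fun v => (Finset.univ.filter fun j : Fin n => a j = v).card with hC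
  have ha1 : ∀ j, 1 ≤ a j := fun j => (Finset.mem_Icc.mp (ha j)).1
  have haN : ∀ j, a j ≤ N := fun j => (Finset.mem_Icc.mp (ha j)).2
  have hpN : p ≤ N := Nat.le_of_dvd hNpos hdvd
  -- threshold characterization
  have thresh : ∀ x (j : Fin n), a j ≤ x ↔ j.val < F x := by
    intro x j
    constructor
    · intro hj
      have hsub : Finset.Iic j ⊆ Finset.univ.filter fun i => a i ≤ x := by
        intro i hi
        simp only [Finset.mem_filter, Finset.mem_univ, true_and]
        exact le_trans (hmono (Finset.mem_Iic.mp hi)) hj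
      have h2 := Finset.card_le_card hsub
      rw [Fin.card_Iic] at h2
      simp only [hF]
      omega
    · intro hj
      by_contra hax
      push_neg at hax
      have hsub : (Finset.univ.filter fun i : Fin n => a i ≤ x) ⊆ Finset.Iio j := by
        intro i hi
        simp only [Finset.mem_filter, Finset.mem_univ, true_and] at hi
        rw [Finset.mem_Iio]
        by_contra hij
        push_neg at hij
        exact absurd (le_trans (hmono hij) hi) (not_le.mpr hax)
      have h2 := Finset.card_le_card hsub
      rw [Fin.card_Iio] at h2
      simp only [hF] at hj
      omega
  have F0 : F 0 = 0 := by
    rw [hF]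
    simp only [Finset.card_eq_zero, Finset.filter_eq_empty_iff]
    intro j _
    have := ha1 j
    omega
  have FN : F N = n := by
    simp only [hF]
    have : (Finset.univ.filter fun j : Fin n => a j ≤ N) = Finset.univ := by
      apply Finset.filter_true_of_mem
      intro j _
      exact haN j
    rw [this, Finset.card_univ, Fintype.card_fin]
  have Fsucc : ∀ x, F (x + 1) = F x + C (x + 1) := by
    intro x
    show (Finset.univ.filter fun j : Fin n => a j ≤ x + 1).card
      = (Finset.univ.filter fun j : Fin n => a j ≤ x).card
        + (Finset.univ.filter fun j : Fin n => a j = x + 1).card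
    rw [← Finset.card_union_of_disjoint]
    · congr 1
      ext j
      simp only [Finset.mem_filter, Finset.mem_univ, true_and, Finset.mem_union]
      omega
    · rw [Finset.disjoint_left]
      intro j hj1 hj2
      simp only [Finset.mem_filter, Finset.mem_univ, true_and] at hj1 hj2
      omega
  have Cper : ∀ v, 1 ≤ v → v + p ≤ N → C (v + p) = C v := by
    intro v hv1 hvN
    have hcount := count_eq (shiftVec N a p) a hshift (v + p)
    have h1 : (Finset.univ.filter fun j : Fin n => shiftVec N a p j = v + p)
        = (Finset.univ.filter fun j : Fin n => a j = v) := by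
      ext j
      simp only [Finset.mem_filter, Finset.mem_univ, true_and]
      simp only [shiftVec, modRep]
      have h1j := ha1 j; have hNj := haN j
      constructor
      · intro hmod
        rcases le_or_gt (a j + p) N with hle | hlt
        · have : (a j + p - 1) % N = a j + p - 1 := Nat.mod_eq_of_lt (by omega)
          omega
        · have : (a j + p - 1) % N = a j + p - 1 - N := by
            rw [Nat.mod_eq_sub_mod (by omega), Nat.mod_eq_of_lt (by omega)]
          omega
      · intro hv
        have : (a j + p - 1) % N = a j + p - 1 := Nat.mod_eq_of_lt (by omega)
        omega
    rw [h1] at hcount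
    simp only [hC]
    omega
  have Fwin : ∀ x, x + p ≤ N → F (x + p) = F x + F p := by
    intro x
    induction x with
    | zero => intro _; simp [F0]
    | succ x ih =>
      intro hx
      have h1 : x + p ≤ N := by omega
      have e : x + 1 + p = (x + p) + 1 := by ring
      rw [e, Fsucc, ih h1, show x + p + 1 = (x + 1) + p by ring,
        Cper (x + 1) (by omega) (by omega), Fsucc]
      ring
  have hlpos : 0 < N / p := Nat.div_pos hpN hp
  have hlp : N / p * p = N := Nat.div_mul_cancel hdvd
  have Fblock : ∀ t, t ≤ N / p → F (t * p) = t * F p := by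
    intro t
    induction t with
    | zero => intro _; simpa using F0
    | succ t ih =>
      intro ht
      have h1 : t * p + p ≤ N := by
        have h2 : (t + 1) * p ≤ (N / p) * p := Nat.mul_le_mul_right p ht
        rw [hlp] at h2
        have h3 : (t + 1) * p = t * p + p := by ring
        omega
      rw [Nat.succ_mul, Fwin _ h1, ih (by omega), Nat.succ_mul]
  have hneq : n = (N / p) * F p := by
    have := Fblock (N / p) le_rfl
    rw [hlp, FN] at this
    exact this
  have hdvdn : (N / p) ∣ n := ⟨F p, hneq⟩
  have hm : n / (N / p) = F p := by
    rw [hneq, Nat.mul_div_cancel_left _ hlpos]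
  refine ⟨hdvdn, ?_, ?_, ha1 _⟩
  · intro j h
    have h' : j.val + F p < n := by rw [hm] at h; exact h
    have e : (⟨j.val + n / (N / p), h⟩ : Fin n) = ⟨j.val + F p, h'⟩ := by
      simp [Fin.mk.injEq, hm]
    rw [e]
    -- show a j ≤ N - p
    have hxp : a j + p ≤ N := by
      by_contra hc
      push_neg at hc
      have h1 : F (N - p) + F p = n := by
        rw [← Fwin (N - p) (by omega), Nat.sub_add_cancel hpN, FN]
      have h2 : ¬ a j ≤ N - p := by omega
      rw [thresh (N - p) j] at h2
      omega
    have hup : a ⟨j.val + F p, h'⟩ ≤ a j + p := by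
      rw [thresh (a j + p) ⟨j.val + F p, h'⟩, Fwin (a j) hxp]
      have := (thresh (a j) j).mp le_rfl
      show j.val + F p < F (a j) + F p
      omega
    have hlow : ¬ a ⟨j.val + F p, h'⟩ ≤ a j - 1 + p := by
      intro hle
      rw [thresh _ ⟨j.val + F p, h'⟩, Fwin (a j - 1) (by omega)] at hle
      have hle2 : j.val + F p < F (a j - 1) + F p := hle
      have h3 : j.val < F (a j - 1) := by omega
      rw [← thresh (a j - 1) j] at h3
      have := ha1 j
      omega
    have := ha1 j
    omega
  · intro j hj
    rw [hm] at hj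
    exact (thresh p j).mpr hj
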